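/- Let n = W ⊕ z be a finite-dimensional 2-step nilpotent Lie algebra over a field k of characteristic zero (z the center, W a linear complement) which is of TST type and satisfies (Λ²n)^n = Λ²z. Then every Lie bialgebra structure δ on n satisfies δ(z) ⊆ Λ²z and δ(W) ⊆ W∧z ⊕ Λ²z. -/

import Mathlib

open TensorProduct

namespace Stmt5Aux

variable {k V : Type*} [Field k] [AddCommGroup V] [Module k V]

/-- Contraction in the first slot: `a ⊗ b ↦ h a • b`. -/
noncomputable def contrAt (h : Module.Dual k V) : V ⊗[k] V →ₗ[k] V :=
  (TensorProduct.lid k V).toLinearMap ∘ₗ TensorProduct.map h LinearMap.id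

@[simp] lemma contrAt_tmul (h : Module.Dual k V) (a b : V) :
    contrAt h (a ⊗ₜ[k] b) = h a • b := by
  simp [contrAt]

/-- An element of `V ⊗ V` viewed as a linear map `V* → V`. -/
noncomputable def Scontr (η : V ⊗[k] V) : Module.Dual k V →ₗ[k] V where
  toFun h := contrAt h η
  map_add' h h' := by simp [contrAt, TensorProduct.map_add_left]
  map_smul' c h := by simp [contrAt, TensorProduct.map_smul_left]

@[simp] lemma Scontr_apply (η : V ⊗[k] V) (h : Module.Dual k V) :
    Scontr η h = contrAt h η := rfl

/-- The pairing `a ⊗ b ↦ f a * h b`. -/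
noncomputable def tpair (f h : Module.Dual k V) : V ⊗[k] V →ₗ[k] k :=
  (TensorProduct.lid k k).toLinearMap ∘ₗ TensorProduct.map f h

@[simp] lemma tpair_tmul (f h : Module.Dual k V) (a b : V) :
    tpair f h (a ⊗ₜ[k] b) = f a * h b := by
  simp [tpair, smul_eq_mul]

lemma tpair_contrAt (f h : Module.Dual k V) (η : V ⊗[k] V) :
    f (contrAt h η) = tpair h f η := by
  induction η using TensorProduct.induction_on with
  | zero => simp
  | tmul a b => simp [mul_comm]
  | add x y hx hy => simp [map_add, hx, hy]

lemma tpair_comm (f h : Module.Dual k V) (η : V ⊗[k] V) :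
    tpair f h (TensorProduct.comm k V V η) = tpair h f η := by
  induction η using TensorProduct.induction_on with
  | zero => simp
  | tmul a b => simp [mul_comm]
  | add x y hx hy => simp [map_add, hx, hy]

lemma comm_map {M N M' N' : Type*} [AddCommGroup M] [Module k M] [AddCommGroup N] [Module k N]
    [AddCommGroup M'] [Module k M'] [AddCommGroup N'] [Module k N']
    (f : M →ₗ[k] M') (g : N →ₗ[k] N') (x : M ⊗[k] N) :
    TensorProduct.comm k M' N' (TensorProduct.map f g x)
      = TensorProduct.map g f (TensorProduct.comm k M N x) := by
  induction x using TensorProduct.induction_on with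
  | zero => simp
  | tmul a b => simp
  | add x y hx hy => simp [map_add, hx, hy]

lemma eq_zero_of_tpair [FiniteDimensional k V] (η : V ⊗[k] V)
    (h0 : ∀ f h : Module.Dual k V, tpair f h η = 0) : η = 0 := by
  set b := Module.finBasis k V
  have key : ∀ i j, ((b.tensorProduct b).repr η) (i, j) = tpair (b.coord i) (b.coord j) η := by
    intro i j
    clear h0
    induction η using TensorProduct.induction_on with
    | zero => simp
    | tmul a c => simp [Module.Basis.tensorProduct_repr_tmul_apply, Module.Basis.coord_apply, mul_comm]
    | add x y hx hy => simp [map_add, hx, hy]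
  have hrepr : (b.tensorProduct b).repr η = 0 := by
    ext ⟨i, j⟩
    rw [key i j, h0]
    simp
  exact ((b.tensorProduct b).repr.map_eq_zero_iff).mp hrepr

end Stmt5Aux
open TensorProduct

/-- The adjoint action of a Lie algebra `g` on `g ⊗ g`, determined by
`x · (a ⊗ b) = ⁅x,a⁆ ⊗ b + a ⊗ ⁅x,b⁆`. -/
noncomputable def tAct (k g : Type*) [CommRing k] [LieRing g] [LieAlgebra k g] (x : g) :
    g ⊗[k] g →ₗ[k] g ⊗[k] g :=
  TensorProduct.map (LieAlgebra.ad k g x) LinearMap.id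
    + TensorProduct.map LinearMap.id (LieAlgebra.ad k g x)

/-- The cyclic rotation `(a⊗b)⊗c ↦ (c⊗a)⊗b` on `(g⊗g)⊗g`. -/
noncomputable def tCyc (k g : Type*) [CommRing k] [AddCommGroup g] [Module k g] :
    (g ⊗[k] g) ⊗[k] g →ₗ[k] (g ⊗[k] g) ⊗[k] g :=
  ((TensorProduct.assoc k g g g).symm.toLinearMap).comp
    (TensorProduct.comm k (g ⊗[k] g) g).toLinearMap

/-- For submodules `P Q ⊆ g`, the image of `P ⊗ Q` in `g ⊗ g`. -/
noncomputable def tsub (k g : Type*) [CommRing k] [AddCommGroup g] [Module k g]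
    (P Q : Submodule k g) : Submodule k (g ⊗[k] g) :=
  LinearMap.range (TensorProduct.map P.subtype Q.subtype)

set_option maxHeartbeats 1000000 in
theorem stmt5 (k n : Type*) [Field k] [CharZero k] [LieRing n] [LieAlgebra k n]
    [FiniteDimensional k n]
    (h2step : ∀ x y : n, ⁅x, y⁆ ∈ LieAlgebra.center k n)
    (W : Submodule k n)
    (hcompl : IsCompl (LieAlgebra.center k n).toSubmodule W)
    -- basis of the center and the maps T_i determined by the bracket:
    {I : Type*} [Fintype I]
    (bz : Module.Basis I k (LieAlgebra.center k n).toSubmodule)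
    (T : I → (W →ₗ[k] Module.Dual k W))
    (hTanti : ∀ i (v w : W), T i v w = - T i w v)
    (hT : ∀ v w : W, (⁅(v : n), (w : n)⁆ : n) = ∑ i, T i v w • ((bz i : n)))
    -- n is of TST type:
    (hTST : ∀ S : Module.Dual k W →ₗ[k] W,
      (∀ f h : Module.Dual k W, f (S h) = - h (S f)) →
      (∀ i l : I, (T i).comp (S.comp (T l)) + (T l).comp (S.comp (T i)) = 0) →
      S = 0)
    -- (Λ²n)^n = Λ²z:
    (hinv : ∀ ω : n ⊗[k] n, TensorProduct.comm k n n ω = -ω →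
      ((∀ x : n, tAct k n x ω = 0) ↔
        ω ∈ tsub k n (LieAlgebra.center k n).toSubmodule (LieAlgebra.center k n).toSubmodule))
    -- δ is a Lie bialgebra structure:
    (δ : n →ₗ[k] n ⊗[k] n)
    (hanti : ∀ x, TensorProduct.comm k n n (δ x) = - δ x)
    (hcoJ : ∀ x, (TensorProduct.map δ LinearMap.id) (δ x)
        + tCyc k n ((TensorProduct.map δ LinearMap.id) (δ x))
        + tCyc k n (tCyc k n ((TensorProduct.map δ LinearMap.id) (δ x))) = 0)
    (hcoc : ∀ x y, δ ⁅x, y⁆ = tAct k n x (δ y) - tAct k n y (δ x)) :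
    (∀ z ∈ (LieAlgebra.center k n).toSubmodule,
      δ z ∈ tsub k n (LieAlgebra.center k n).toSubmodule (LieAlgebra.center k n).toSubmodule)
    ∧ (∀ v ∈ W, δ v ∈
        tsub k n W (LieAlgebra.center k n).toSubmodule
          ⊔ tsub k n (LieAlgebra.center k n).toSubmodule W
          ⊔ tsub k n (LieAlgebra.center k n).toSubmodule (LieAlgebra.center k n).toSubmodule) := by
  classical
  -- basic facts about the center
  have hcent : ∀ z ∈ (LieAlgebra.center k n).toSubmodule, ∀ y : n, ⁅y, z⁆ = 0 := by
    intro z hz y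
    exact (LieModule.mem_maxTrivSubmodule k n n z).mp hz y
  have hcent' : ∀ z ∈ (LieAlgebra.center k n).toSubmodule, ∀ y : n, ⁅z, y⁆ = 0 := by
    intro z hz y
    rw [← lie_skew, hcent z hz y, neg_zero]
  have htActz : ∀ z ∈ (LieAlgebra.center k n).toSubmodule, tAct k n z = 0 := by
    intro z hz
    have hadz : LieAlgebra.ad k n z = 0 := by
      apply LinearMap.ext
      intro y
      simp [LieAlgebra.ad_apply, hcent' z hz y]
    simp [tAct, hadz]
  -- Part 1
  have part1 : ∀ z ∈ (LieAlgebra.center k n).toSubmodule, δ z ∈ tsub k n (LieAlgebra.center k n).toSubmodule (LieAlgebra.center k n).toSubmodule := by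
    intro z hz
    refine (hinv (δ z) (hanti z)).mp ?_
    intro x
    have h1 := hcoc x z
    rw [hcent z hz x, map_zero, htActz z hz] at h1
    simpa using h1.symm
  refine ⟨part1, ?_⟩
  -- projections
  have hc' : IsCompl W (LieAlgebra.center k n).toSubmodule := hcompl.symm
  set pW : n →ₗ[k] W := W.linearProjOfIsCompl (LieAlgebra.center k n).toSubmodule hc' with hpWdef
  set qZ : n →ₗ[k] (LieAlgebra.center k n).toSubmodule := (LieAlgebra.center k n).toSubmodule.linearProjOfIsCompl W hcompl with hqZdef
  have hpW_Z : ∀ x ∈ (LieAlgebra.center k n).toSubmodule, pW x = 0 := fun x hx =>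
    Submodule.linearProjOfIsCompl_apply_right' hc' hx
  have hqZ_Z : ∀ z : (LieAlgebra.center k n).toSubmodule, qZ ↑z = z := fun z =>
    Submodule.linearProjOfIsCompl_apply_left hcompl z
  have hdecomp : ∀ x : n, ((qZ x : n)) + (pW x : n) = x := fun x =>
    Submodule.projection_add_projection_eq_self hcompl x
  -- the functionals ζ and the maps e, η, S
  set ζ : I → (n →ₗ[k] k) := fun l => (bz.coord l) ∘ₗ qZ with hζdef
  set e : I → (n ⊗[k] n →ₗ[k] W) := fun l =>
    (TensorProduct.lid k W).toLinearMap ∘ₗ TensorProduct.map (ζ l) pW with hedef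
  set S : n → (Module.Dual k W →ₗ[k] W) := fun x =>
    Stmt5Aux.Scontr (TensorProduct.map pW pW (δ x)) with hSdef
  have he_tmul : ∀ (l : I) (x y : n), e l (x ⊗ₜ[k] y) = ζ l x • pW y := by
    intro l x y
    simp [hedef]
  -- ζ picks out the l-th bracket coefficient
  have hζbr : ∀ (l : I) (a : W) (x : n), ζ l ⁅(a : n), x⁆ = T l a (pW x) := by
    intro l a x
    conv_lhs => rw [← hdecomp x]
    rw [lie_add, hcent ((qZ x : n)) (qZ x).2 (a : n), zero_add, hT a (pW x)]
    rw [map_sum]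
    have : ∀ j, ζ l ((T j a (pW x)) • ((bz j : n))) = if j = l then T j a (pW x) else 0 := by
      intro j
      rw [map_smul]
      have : ζ l ((bz j : n)) = if j = l then 1 else 0 := by
        simp [hζdef, hqZ_Z (bz j), Module.Basis.coord_apply, Module.Basis.repr_self, Finsupp.single_apply]
      rw [this]
      by_cases hjl : j = l <;> simp [hjl]
    simp only [this]
    simp
  -- e l applied to the action of an element of W
  have hel : ∀ (l : I) (a : W) (ω : n ⊗[k] n),
      e l (tAct k n (a : n) ω) = Stmt5Aux.contrAt (T l a) (TensorProduct.map pW pW ω) := by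
    intro l a ω
    induction ω using TensorProduct.induction_on with
    | zero => simp
    | tmul x y =>
      have hact : tAct k n (a : n) (x ⊗ₜ[k] y) = ⁅(a : n), x⁆ ⊗ₜ[k] y + x ⊗ₜ[k] ⁅(a : n), y⁆ := by
        simp [tAct, LieAlgebra.ad_apply]
      rw [hact, map_add, he_tmul, he_tmul]
      have hpy : pW ⁅(a : n), y⁆ = 0 := hpW_Z _ (h2step (a : n) y)
      rw [hpy, smul_zero, add_zero, hζbr]
      simp
    | add x y hx hy => simp [map_add, hx, hy]
  -- e l vanishes on z ⊗ z
  have hezero : ∀ (l : I) (ω : n ⊗[k] n), ω ∈ tsub k n (LieAlgebra.center k n).toSubmodule (LieAlgebra.center k n).toSubmodule → e l ω = 0 := by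
    rintro l ω ⟨t, rfl⟩
    induction t using TensorProduct.induction_on with
    | zero => simp
    | tmul z1 z2 =>
      rw [TensorProduct.map_tmul, he_tmul]
      have hz2 : pW ((LieAlgebra.center k n).toSubmodule.subtype z2) = 0 := hpW_Z _ z2.2
      rw [hz2, smul_zero]
    | add x y hx hy => simp [map_add, hx, hy]
  -- key symmetry relation
  have hkey : ∀ (a b : W) (l : I), S (b : n) (T l a) = S (a : n) (T l b) := by
    intro a b l
    have h1 := hcoc (a : n) (b : n)
    have h2 : e l (δ ⁅(a : n), (b : n)⁆) = 0 :=
      hezero l _ (part1 _ (h2step (a : n) (b : n)))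
    rw [h1, map_sub, hel, hel] at h2
    exact sub_eq_zero.mp h2
  -- antisymmetry of S
  have hanti_S : ∀ (x : n) (f h : Module.Dual k W), f (S x h) = - h (S x f) := by
    intro x f h
    have hc : TensorProduct.comm k W W (TensorProduct.map pW pW (δ x))
        = - TensorProduct.map pW pW (δ x) := by
      rw [Stmt5Aux.comm_map, hanti, map_neg]
    have e1 : f (S x h) = Stmt5Aux.tpair h f (TensorProduct.map pW pW (δ x)) :=
      Stmt5Aux.tpair_contrAt f h _
    have e2 : h (S x f) = Stmt5Aux.tpair f h (TensorProduct.map pW pW (δ x)) :=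
      Stmt5Aux.tpair_contrAt h f _
    rw [e1, e2]
    calc Stmt5Aux.tpair h f (TensorProduct.map pW pW (δ x))
        = Stmt5Aux.tpair f h (TensorProduct.comm k ↥W ↥W (TensorProduct.map pW pW (δ x))) :=
          (Stmt5Aux.tpair_comm f h _).symm
      _ = Stmt5Aux.tpair f h (- TensorProduct.map pW pW (δ x)) := by rw [hc]
      _ = - Stmt5Aux.tpair f h (TensorProduct.map pW pW (δ x)) := by simp
  -- generic sign relation
  have Bgen : ∀ (y : n) (i l : I) (a b : W),
      T i (S y (T l b)) a = - T l (S y (T i a)) b := by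
    intro y i l a b
    rw [hTanti i (S y (T l b)) a, hanti_S y (T i a) (T l b), hTanti l b (S y (T i a))]
    ring
  -- Part 2
  intro v hv
  lift v to W using hv with v' hv'
  -- S v' satisfies the TST equations
  have hS0 : S (v' : n) = 0 := by
    apply hTST _ (hanti_S (v' : n))
    intro i l
    apply LinearMap.ext; intro x; apply LinearMap.ext; intro u
    have c1 : T i (S (v' : n) (T l x)) u = - T l (S (v' : n) (T i x)) u := by
      rw [hkey x v' l, Bgen (x : n) i l u v', hkey u x i, Bgen (u : n) l i v' x,
        hkey v' u l, Bgen (v' : n) i l x u]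
      ring
    simp only [LinearMap.add_apply, LinearMap.comp_apply, LinearMap.zero_apply]
    rw [c1]
    ring
  -- hence the W⊗W component of δ v' vanishes
  have hη0 : TensorProduct.map pW pW (δ (v' : n)) = 0 := by
    apply Stmt5Aux.eq_zero_of_tpair
    intro f h
    rw [← Stmt5Aux.tpair_contrAt h f]
    have h1 : Stmt5Aux.contrAt f (TensorProduct.map pW pW (δ (v' : n))) = S (v' : n) f := rfl
    rw [h1, hS0]
    simp
  -- decompose δ v'
  set A : n →ₗ[k] n := W.subtype ∘ₗ pW with hAdef
  set B : n →ₗ[k] n := (LieAlgebra.center k n).toSubmodule.subtype ∘ₗ qZ with hBdef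
  have hid : A + B = LinearMap.id := by
    apply LinearMap.ext
    intro x
    simpa [hAdef, hBdef, add_comm] using hdecomp x
  have hexp : δ (v' : n)
      = TensorProduct.map A A (δ (v' : n)) + TensorProduct.map A B (δ (v' : n))
        + TensorProduct.map B A (δ (v' : n)) + TensorProduct.map B B (δ (v' : n)) := by
    have : TensorProduct.map (A + B) (A + B)
        = TensorProduct.map A A + TensorProduct.map A B
          + TensorProduct.map B A + TensorProduct.map B B := by
      rw [TensorProduct.map_add_left, TensorProduct.map_add_right, TensorProduct.map_add_right]
      abel
    have h0 : TensorProduct.map (A + B) (A + B) (δ (v' : n)) = δ (v' : n) := by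
      rw [hid]
      simp [TensorProduct.map_id]
    conv_lhs => rw [← h0]
    rw [this]
    simp [LinearMap.add_apply]
  have hAA : TensorProduct.map A A (δ (v' : n)) = 0 := by
    rw [hAdef, TensorProduct.map_comp, LinearMap.comp_apply, hη0, map_zero]
  have hAB : TensorProduct.map A B (δ (v' : n)) ∈ tsub k n W (LieAlgebra.center k n).toSubmodule := by
    rw [hAdef, hBdef, TensorProduct.map_comp]
    exact ⟨TensorProduct.map pW qZ (δ (v' : n)), rfl⟩
  have hBA : TensorProduct.map B A (δ (v' : n)) ∈ tsub k n (LieAlgebra.center k n).toSubmodule W := by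
    rw [hAdef, hBdef, TensorProduct.map_comp]
    exact ⟨TensorProduct.map qZ pW (δ (v' : n)), rfl⟩
  have hBB : TensorProduct.map B B (δ (v' : n)) ∈ tsub k n (LieAlgebra.center k n).toSubmodule (LieAlgebra.center k n).toSubmodule := by
    rw [hBdef, TensorProduct.map_comp]
    exact ⟨TensorProduct.map qZ qZ (δ (v' : n)), rfl⟩
  rw [hexp, hAA, zero_add]
  refine Submodule.add_mem _ (Submodule.add_mem _ ?_ ?_) ?_
  · exact Submodule.mem_sup_left (Submodule.mem_sup_left hAB)
  · exact Submodule.mem_sup_left (Submodule.mem_sup_right hBA)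
  · exact Submodule.mem_sup_right hBB
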